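/- Let p be a prime, n ≥ 0 an integer, and f ∈ ℤ_p[[X]]. Suppose x_0, x_1, ..., x_{p-1} ∈ ℤ_p[[X]] satisfy X^n · f = Σ_{i=0}^{p-1} (1+X)^i · x_i((1+X)^p - 1). Then x_0 belongs to the ideal (p, X)^[n/p] of ℤ_p[[X]], i.e. the [n/p]-th power of the ideal generated by p and X. -/

import Mathlib

open PowerSeries

/-- Substitution of a power series `g` with zero constant term into a power series `f`:
the coefficient of `X^d` in `f(g)` is `∑_{n ≤ d} (coeff n f) · (coeff d g^n)`.
(When the constant term of `g` vanishes, `coeff d (g^n) = 0` for `n > d`, so this is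
the usual substitution `f ↦ f(g)`.) -/
noncomputable def PowerSeries.subst' {R : Type*} [CommRing R] (g f : R⟦X⟧) : R⟦X⟧ :=
  PowerSeries.mk fun d => ∑ n ∈ Finset.range (d + 1), coeff n f * coeff d (g ^ n)

namespace WeakEstimateAux

open Finset

lemma coeff_one_add_X_pow' {R : Type*} [CommRing R] (n k : ℕ) :
    coeff k ((1 + X) ^ n) = (n.choose k : R) := by
  have : ((1 : R⟦X⟧) + X) ^ n = (((1 + Polynomial.X) ^ n : Polynomial R) : R⟦X⟧) := by
    push_cast
    rfl
  rw [this, Polynomial.coeff_coe, Polynomial.coeff_one_add_X_pow]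

variable (p : ℕ) [hp : Fact p.Prime]

noncomputable def Hser : PowerSeries ℤ_[p] :=
  PowerSeries.mk fun k => ((p.choose k / p : ℕ) : ℤ_[p])

lemma p_mul_Hser : (p : PowerSeries ℤ_[p]) * Hser p = ((1 + X) ^ p - 1) - X ^ p := by
  ext k
  rw [← map_natCast (C) p, coeff_C_mul]
  simp only [Hser, coeff_mk, map_sub, coeff_one_add_X_pow', coeff_one, coeff_X_pow]
  rcases Nat.lt_trichotomy k p with hk | rfl | hk
  · rcases Nat.eq_zero_or_pos k with rfl | hk0
    · simp [Nat.div_eq_of_lt hp.out.one_lt, hp.out.pos.ne]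
    · have hdvd : p ∣ p.choose k := hp.out.dvd_choose_self hk0.ne' hk
      rw [← Nat.cast_mul, Nat.mul_div_cancel' hdvd]
      simp [hk.ne, hk0.ne']
  · simp [Nat.div_self hp.out.pos, Nat.div_eq_of_lt hp.out.one_lt, hp.out.ne_zero,
      Nat.choose_self]
  · rw [Nat.choose_eq_zero_of_lt hk]
    have h0 : k ≠ 0 := by omega
    simp [hk.ne', h0, fun h : 0 = k => h0 h.symm]

lemma Q_eq : ((1 + X) ^ p - 1 : PowerSeries ℤ_[p]) = (p : PowerSeries ℤ_[p]) * Hser p + X ^ p := by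
  rw [p_mul_Hser]; ring

lemma Q_pow_expand (l : ℕ) : ((1 + X) ^ p - 1 : PowerSeries ℤ_[p]) ^ l =
    ∑ t ∈ range (l + 1), (p : PowerSeries ℤ_[p]) ^ t * (Hser p) ^ t * X ^ (p * (l - t)) *
      (l.choose t : PowerSeries ℤ_[p]) := by
  rw [Q_eq, add_pow]
  refine Finset.sum_congr rfl fun t _ => ?_
  rw [mul_pow, ← pow_mul]

lemma coeff_zero_Q_pow {v l : ℕ} (h : v < l) :
    coeff v (((1 + X) ^ p - 1 : PowerSeries ℤ_[p]) ^ l) = 0 := by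
  have hX : (X : PowerSeries ℤ_[p]) ^ l ∣ ((1 + X) ^ p - 1) ^ l := by
    apply pow_dvd_pow_of_dvd
    rw [X_dvd_iff]
    simp [coeff_one_add_X_pow']
  exact X_pow_dvd_iff.mp hX v h

lemma dvd_coeff_mul_Q_pow (g : PowerSeries ℤ_[p]) (l d : ℕ) :
    (p : ℤ_[p]) ^ (l - d / p) ∣ coeff d (g * ((1 + X) ^ p - 1) ^ l) := by
  rw [Q_pow_expand, Finset.mul_sum, map_sum]
  refine Finset.dvd_sum fun t _ => ?_
  by_cases hd : p * (l - t) ≤ d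
  · have ht : l - d / p ≤ t := by
      have h2 : (l - t) * p ≤ d := by rw [mul_comm]; exact hd
      have h3 := (Nat.le_div_iff_mul_le hp.out.pos).mpr h2
      omega
    have : (p : ℤ_[p]) ^ t ∣ coeff d (g * ((p:PowerSeries ℤ_[p]) ^ t * (Hser p) ^ t * X ^ (p * (l - t)) * (l.choose t : PowerSeries ℤ_[p]))) := by
      have : g * ((p:PowerSeries ℤ_[p]) ^ t * (Hser p) ^ t * X ^ (p * (l - t)) * (l.choose t : PowerSeries ℤ_[p]))
          = (C ((p:ℤ_[p])^t)) * (g * ((Hser p) ^ t * X ^ (p * (l - t)) * (l.choose t : PowerSeries ℤ_[p]))) := by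
        rw [map_pow, map_natCast]
        ring
      rw [this, coeff_C_mul]
      exact Dvd.intro _ rfl
    exact dvd_trans (pow_dvd_pow _ ht) this
  · have hzero : coeff d (g * ((p:PowerSeries ℤ_[p]) ^ t * (Hser p) ^ t * X ^ (p * (l - t)) * (l.choose t : PowerSeries ℤ_[p]))) = 0 := by
      have hXdvd : (X : PowerSeries ℤ_[p]) ^ (p * (l - t)) ∣
          g * ((p:PowerSeries ℤ_[p]) ^ t * (Hser p) ^ t * X ^ (p * (l - t)) * (l.choose t : PowerSeries ℤ_[p])) :=
        ⟨g * ((p:PowerSeries ℤ_[p]) ^ t * (Hser p) ^ t * (l.choose t : PowerSeries ℤ_[p])), by ring⟩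
      exact X_pow_dvd_iff.mp hXdvd d (by omega)
    rw [hzero]
    exact dvd_zero _

lemma coeff_mul_Q_pow_mod_p (i l d : ℕ) (h : p * l ≤ d) :
    (p : ℤ_[p]) ∣ coeff d ((1 + X) ^ i * ((1 + X) ^ p - 1) ^ l)
      - (i.choose (d - p * l) : ℤ_[p]) := by
  rw [Q_pow_expand, Finset.mul_sum, map_sum, Finset.sum_range_succ']
  have h0 : coeff d ((1 + X) ^ i * ((p : PowerSeries ℤ_[p]) ^ 0 * (Hser p) ^ 0 * X ^ (p * (l - 0)) * (l.choose 0 : PowerSeries ℤ_[p])))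
      = (i.choose (d - p * l) : ℤ_[p]) := by
    simp only [pow_zero, one_mul, Nat.sub_zero, Nat.choose_zero_right, Nat.cast_one, mul_one]
    rw [coeff_mul_X_pow', if_pos h, coeff_one_add_X_pow']
  rw [h0, add_sub_cancel_right]
  refine Finset.dvd_sum fun t _ => ?_
  have : (1 + X) ^ i * ((p:PowerSeries ℤ_[p]) ^ (t+1) * (Hser p) ^ (t+1) * X ^ (p * (l - (t+1))) * (l.choose (t+1) : PowerSeries ℤ_[p]))
      = (C ((p:ℤ_[p])^(t+1))) * ((1 + X) ^ i * ((Hser p) ^ (t+1) * X ^ (p * (l - (t+1))) * (l.choose (t+1) : PowerSeries ℤ_[p]))) := by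
    rw [map_pow, map_natCast]
    ring
  rw [this, coeff_C_mul]
  exact Dvd.dvd.mul_right (dvd_pow_self _ (Nat.succ_ne_zero t)) _

lemma coeff_mul_subst' (a g : PowerSeries ℤ_[p]) (d : ℕ) :
    coeff d (a * PowerSeries.subst' ((1 + X) ^ p - 1) g) =
      ∑ l ∈ range (d + 1), coeff l g * coeff d (a * ((1 + X) ^ p - 1) ^ l) := by
  rw [PowerSeries.coeff_mul]
  have step1 : ∀ uv ∈ antidiagonal d,
      coeff uv.1 a * coeff uv.2 (PowerSeries.subst' ((1 + X) ^ p - 1) g)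
      = ∑ l ∈ range (d + 1), coeff l g *
          (coeff uv.1 a * coeff uv.2 (((1 + X) ^ p - 1 : PowerSeries ℤ_[p]) ^ l)) := by
    rintro ⟨u, v⟩ huv
    rw [HasAntidiagonal.mem_antidiagonal] at huv
    have hv : v + 1 ≤ d + 1 := by omega
    simp only [PowerSeries.subst', coeff_mk]
    rw [← Finset.sum_subset (Finset.range_subset_range.mpr hv) (fun l _ hl => ?_)]
    · rw [Finset.mul_sum]
      refine Finset.sum_congr rfl fun l _ => by ring
    · exact mul_eq_zero_of_right _ (mul_eq_zero_of_right _
        (coeff_zero_Q_pow p (v := v) (l := l) (by simp at hl; omega)))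
  rw [Finset.sum_congr rfl step1, Finset.sum_comm]
  refine Finset.sum_congr rfl fun l _ => ?_
  rw [← Finset.mul_sum, PowerSeries.coeff_mul]

lemma mem_span_pow_of_coeff_dvd :
    ∀ (m : ℕ) (f : PowerSeries ℤ_[p]),
    (∀ j, (p : ℤ_[p]) ^ (m - j) ∣ coeff j f) →
    f ∈ (Ideal.span {(p : PowerSeries ℤ_[p]), X}) ^ m := by
  intro m
  induction m with
  | zero => intro f _; simp
  | succ m ih =>
    intro f hf
    set I : Ideal (PowerSeries ℤ_[p]) := Ideal.span {(p : PowerSeries ℤ_[p]), X} with hI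
    have hpI : (p : PowerSeries ℤ_[p]) ∈ I := Ideal.subset_span (by simp)
    have hXI : (X : PowerSeries ℤ_[p]) ∈ I := Ideal.subset_span (by simp)
    obtain ⟨c, hc⟩ := hf 0
    have hsplit : f = C (coeff 0 f) + X * PowerSeries.mk (fun k => coeff (k+1) f) := by
      ext k
      cases k with
      | zero => simp
      | succ k => simp [coeff_succ_X_mul, coeff_C]
    rw [hsplit]
    apply Ideal.add_mem
    · rw [Nat.sub_zero] at hc
      rw [hc, map_mul, map_pow, map_natCast]
      exact Ideal.mul_mem_right _ _ (Ideal.pow_mem_pow hpI (m+1))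
    · rw [pow_succ, mul_comm (X : PowerSeries ℤ_[p])]
      have hg : (PowerSeries.mk fun k => coeff (k+1) f) ∈ I ^ m :=
        ih (PowerSeries.mk fun k => coeff (k+1) f)
          (fun j => by simpa using hf (j+1))
      exact Ideal.mul_mem_mul hg hXI

end WeakEstimateAux

open WeakEstimateAux Finset

/-- **Weak Estimate** (Proposition 3.1): if `X^n f = ∑_{i<p} (1+X)^i xᵢ((1+X)^p - 1)`
in `ℤ_p[[X]]`, then `x₀ = ψ(X^n f)` lies in `(p, X)^[n/p]`. -/
theorem weak_estimate_psi (p : ℕ) [hp : Fact p.Prime] (n : ℕ) (f : PowerSeries ℤ_[p])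
    (x : Fin p → PowerSeries ℤ_[p])
    (hx : X ^ n * f =
      ∑ i : Fin p, (1 + X) ^ (i : ℕ) * PowerSeries.subst' ((1 + X) ^ p - 1) (x i)) :
    x 0 ∈ (Ideal.span {(p : PowerSeries ℤ_[p]), X}) ^ (n / p) := by
  classical
  have hppos := hp.out.pos
  set m := n / p with hm
  have heq : ∀ d, d < n → (0 : ℤ_[p]) =
      ∑ i : Fin p, ∑ l ∈ range (d + 1),
        coeff l (x i) * coeff d ((1 + X) ^ (i : ℕ) * ((1 + X) ^ p - 1) ^ l) := by
    intro d hd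
    have h1 : coeff d (X ^ n * f) = 0 :=
      X_pow_dvd_iff.mp (dvd_mul_right _ _) d hd
    calc (0:ℤ_[p]) = coeff d (X ^ n * f) := h1.symm
    _ = coeff d (∑ i : Fin p, (1 + X) ^ (i : ℕ) * PowerSeries.subst' ((1 + X) ^ p - 1) (x i)) := by
        rw [hx]
    _ = ∑ i : Fin p, ∑ l ∈ range (d + 1),
          coeff l (x i) * coeff d ((1 + X) ^ (i : ℕ) * ((1 + X) ^ p - 1) ^ l) := by
        rw [map_sum]
        exact Finset.sum_congr rfl fun i _ => coeff_mul_subst' p _ _ d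
  have key : ∀ s, ∀ (i : Fin p) (j : ℕ),
      (p : ℤ_[p]) ^ (min s (m - j)) ∣ coeff j (x i) := by
    intro s
    induction s with
    | zero => intro i j; simp
    | succ s IH =>
      intro i j
      by_cases hj : m - j ≤ s
      · have h1 := IH i j
        have h2 : min (s+1) (m-j) = min s (m-j) := by omega
        rwa [h2]
      · have hjm : j + s + 1 ≤ m := by omega
        rw [min_eq_left (by omega)]
        have hIH : ∀ i' : Fin p, ∃ u : ℤ_[p], coeff j (x i') = (p:ℤ_[p])^s * u := by
          intro i'
          have h1 := IH i' j
          rw [min_eq_left (by omega)] at h1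
          exact h1
        choose u hu using hIH
        have hSr : ∀ r, r < p → (p : ℤ_[p]) ∣ ∑ i' : Fin p, u i' * ((i' : ℕ).choose r : ℤ_[p]) := by
          intro r hr
          set d := p * j + r with hd
          have hpmn : m * p ≤ n := Nat.div_mul_le_self n p
          have hpjm : p * j + p ≤ p * m := by
            have := Nat.mul_le_mul_left p (show j + 1 ≤ m by omega)
            rwa [Nat.mul_succ] at this
          have hdn : d < n := by
            have : p * m ≤ n := by rw [mul_comm]; exact hpmn
            omega
          have hdp : d / p = j := by
            rw [hd, Nat.mul_add_div hppos, Nat.div_eq_of_lt hr, add_zero]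
          have hjd : j ∈ range (d + 1) := mem_range.mpr (by
            have : j ≤ p * j := Nat.le_mul_of_pos_left j hppos
            omega)
          have E := heq d hdn
          have Esplit : (0:ℤ_[p]) =
              (∑ i' : Fin p, coeff j (x i') *
                coeff d ((1+X)^(i':ℕ) * ((1+X)^p - 1)^j))
              + ∑ i' : Fin p, ∑ l ∈ (range (d+1)).erase j,
                  coeff l (x i') * coeff d ((1+X)^(i':ℕ) * ((1+X)^p-1)^l) := by
            rw [E, ← Finset.sum_add_distrib]
            exact Finset.sum_congr rfl fun i' _ => (Finset.add_sum_erase _ _ hjd).symm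
          have hT : (p:ℤ_[p])^(s+1) ∣ ∑ i' : Fin p, ∑ l ∈ (range (d+1)).erase j,
              coeff l (x i') * coeff d ((1+X)^(i':ℕ) * ((1+X)^p-1)^l) := by
            refine Finset.dvd_sum fun i' _ => Finset.dvd_sum fun l hl => ?_
            have hlj : l ≠ j := (Finset.mem_erase.mp hl).1
            rcases lt_or_gt_of_ne hlj with hlt | hgt
            · -- l < j
              have h1 : (p:ℤ_[p])^s ∣ coeff l (x i') := by
                have h2 := IH i' l
                rwa [min_eq_left (by omega)] at h2
              have hpl : p * l + p ≤ p * j := by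
                have := Nat.mul_le_mul_left p (show l + 1 ≤ j by omega)
                rwa [Nat.mul_succ] at this
              have h2 : (p:ℤ_[p]) ∣ coeff d ((1+X)^(i':ℕ) * ((1+X)^p-1)^l) := by
                have hbc := coeff_mul_Q_pow_mod_p p (i':ℕ) l d (by omega)
                have hz : ((i':ℕ).choose (d - p*l) : ℤ_[p]) = 0 := by
                  rw [Nat.choose_eq_zero_of_lt (by have := i'.isLt; omega), Nat.cast_zero]
                rwa [hz, sub_zero] at hbc
              rw [pow_succ]
              exact mul_dvd_mul h1 h2
            · -- l > j
              have h1 : (p:ℤ_[p])^(min s (m - l)) ∣ coeff l (x i') := IH i' l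
              have h2 : (p:ℤ_[p])^(l - j) ∣ coeff d ((1+X)^(i':ℕ) * ((1+X)^p-1)^l) := by
                have h3 := dvd_coeff_mul_Q_pow p ((1+X)^(i':ℕ)) l d
                rwa [hdp] at h3
              have h3 : (p:ℤ_[p])^(min s (m-l) + (l - j)) ∣
                  coeff l (x i') * coeff d ((1+X)^(i':ℕ) * ((1+X)^p-1)^l) := by
                rw [pow_add]
                exact mul_dvd_mul h1 h2
              exact dvd_trans (pow_dvd_pow _ (by omega : s+1 ≤ min s (m-l) + (l-j))) h3
          have hfirst : (p:ℤ_[p])^(s+1) ∣ ∑ i' : Fin p, coeff j (x i') *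
              coeff d ((1+X)^(i':ℕ) * ((1+X)^p - 1)^j) := by
            have hA := eq_neg_of_add_eq_zero_left Esplit.symm
            rw [hA]
            exact (dvd_neg).mpr hT
          have hrw : ∑ i' : Fin p, coeff j (x i') *
              coeff d ((1+X)^(i':ℕ) * ((1+X)^p - 1)^j)
              = (p:ℤ_[p])^s * ∑ i' : Fin p, u i' *
                  coeff d ((1+X)^(i':ℕ) * ((1+X)^p - 1)^j) := by
            rw [Finset.mul_sum]
            exact Finset.sum_congr rfl fun i' _ => by rw [hu i']; ring
          rw [hrw, pow_succ] at hfirst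
          have hpne : ((p:ℤ_[p])^s) ≠ 0 :=
            pow_ne_zero _ (Nat.cast_ne_zero.mpr hp.out.ne_zero)
          have hW : (p:ℤ_[p]) ∣ ∑ i' : Fin p, u i' *
              coeff d ((1+X)^(i':ℕ) * ((1+X)^p - 1)^j) :=
            (mul_dvd_mul_iff_left hpne).mp hfirst
          have hBC : ∀ i' : Fin p, (p:ℤ_[p]) ∣
              coeff d ((1+X)^(i':ℕ) * ((1+X)^p - 1)^j) - ((i':ℕ).choose r : ℤ_[p]) := by
            intro i'
            have h4 := coeff_mul_Q_pow_mod_p p (i':ℕ) j d (by omega)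
            have h5 : d - p * j = r := by omega
            rwa [h5] at h4
          have hsum : ∑ i' : Fin p, u i' * ((i' : ℕ).choose r : ℤ_[p])
              = (∑ i' : Fin p, u i' * coeff d ((1+X)^(i':ℕ) * ((1+X)^p - 1)^j))
                - ∑ i' : Fin p, u i' *
                  (coeff d ((1+X)^(i':ℕ) * ((1+X)^p - 1)^j) - ((i':ℕ).choose r : ℤ_[p])) := by
            rw [← Finset.sum_sub_distrib]
            exact Finset.sum_congr rfl fun i' _ => by ring
          rw [hsum]
          exact dvd_sub hW (Finset.dvd_sum fun i' _ => Dvd.dvd.mul_left (hBC i') (u i'))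
        -- downward induction on Fin p
        have step : ∀ i' : Fin p,
            (∀ i'' : Fin p, (i':ℕ) < (i'':ℕ) → (p:ℤ_[p]) ∣ u i'') → (p:ℤ_[p]) ∣ u i' := by
          intro i' hrec
          have hS := hSr (i' : ℕ) i'.isLt
          have hsplit := Finset.add_sum_erase Finset.univ
            (fun i'' : Fin p => u i'' * (((i'':ℕ).choose (i':ℕ) : ℕ) : ℤ_[p])) (Finset.mem_univ i')
          have hrest : (p:ℤ_[p]) ∣ ∑ i'' ∈ Finset.univ.erase i',
              u i'' * (((i'':ℕ).choose (i':ℕ) : ℕ) : ℤ_[p]) := by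
            refine Finset.dvd_sum fun i'' hi'' => ?_
            have hne : i'' ≠ i' := Finset.ne_of_mem_erase hi''
            have hne' : (i'':ℕ) ≠ (i':ℕ) := fun h => hne (Fin.ext h)
            rcases lt_or_gt_of_ne hne' with hlt | hgt
            · rw [Nat.choose_eq_zero_of_lt hlt, Nat.cast_zero, mul_zero]
              exact dvd_zero _
            · exact Dvd.dvd.mul_right (hrec i'' hgt) _
          have hterm : u i' * (((i':ℕ).choose (i':ℕ) : ℕ) : ℤ_[p])
              = (∑ i'' : Fin p, u i'' * (((i'':ℕ).choose (i':ℕ) : ℕ) : ℤ_[p]))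
                - ∑ i'' ∈ Finset.univ.erase i', u i'' * (((i'':ℕ).choose (i':ℕ) : ℕ) : ℤ_[p]) := by
            rw [← hsplit]; ring
          have := dvd_sub hS hrest
          rw [← hterm, Nat.choose_self, Nat.cast_one, mul_one] at this
          exact this
        have down : ∀ k, ∀ i' : Fin p, p ≤ (i':ℕ) + k + 1 → (p:ℤ_[p]) ∣ u i' := by
          intro k
          induction k with
          | zero =>
            intro i' hi'
            exact step i' (fun i'' h => absurd i''.isLt (by omega))
          | succ k ihk =>
            intro i' _
            exact step i' (fun i'' h => ihk i'' (by omega))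
        have hpu : (p:ℤ_[p]) ∣ u i := down p i (by omega)
        obtain ⟨w, hw⟩ := hpu
        rw [hu i, hw, pow_succ]
        exact Dvd.intro w (by ring)
  apply mem_span_pow_of_coeff_dvd p m (x 0)
  intro j
  have h1 := key m 0 j
  rwa [min_eq_right (Nat.sub_le m j)] at h1
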